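/- Let q be a prime power, D ≥ 3, e ≥ 0, and τ = i·q^{-(D+e)/2}. With 𝔲, 𝔲', 𝔵 the 2D × 2D matrices of the nil-DAHA representation (as in Proposition 8.6 of the paper), one has 𝔲' = q·𝔲·𝔵. -/
import Mathlib


noncomputable section

/-- `q` raised to a real power, as a complex number. -/
def rr (q : ℕ) (x : ℝ) : ℂ := (((q : ℝ) ^ x : ℝ) : ℂ)

/-- Entries of the 2×2 block `t(j)` (the same for all `j`):
rows `(q^{-e/2} - q^{e/2}, q^{e/2})` and `(q^{-e/2}, 0)`. -/
def tEnt (q : ℕ) (e : ℝ) : ℕ → ℕ → ℂ := fun a b =>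
  if a = 0 then (if b = 0 then rr q (-e / 2) - rr q (e / 2) else rr q (e / 2))
  else (if b = 0 then rr q (-e / 2) else 0)

/-- Entries of the 2×2 block `t'(j)` for `1 ≤ j ≤ D-1`. -/
def tpEnt (q D : ℕ) (j : ℕ) : ℕ → ℕ → ℂ := fun a b =>
  Complex.I *
    (if a = 0 then
      (if b = 0 then rr q (-(D : ℝ) / 2) * ((q : ℂ) ^ D - (q : ℂ) ^ j + 1)
       else rr q ((D : ℝ) / 2) * (rr q ((j : ℝ) - (D : ℝ)) - 1))
     else
      (if b = 0 then rr q (-(D : ℝ) / 2) * (1 - (q : ℂ) ^ j)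
       else rr q ((j : ℝ) - (D : ℝ) / 2)))

/-- Entries of the 2×2 block `u(j)` for `1 ≤ j ≤ D-1`: rows `(-1, 1-q^{D-j})`, `(0,0)`. -/
def uEnt (q D : ℕ) (j : ℕ) : ℕ → ℕ → ℂ := fun a b =>
  if a = 0 then (if b = 0 then -1 else 1 - (q : ℂ) ^ (D - j)) else 0

/-- Entries of the 2×2 block `u'(j)`: rows `(0,0)`, `(-i·q^{(D-e)/2 - j}, 0)`. -/
def upEnt (q D : ℕ) (e : ℝ) (j : ℕ) : ℕ → ℕ → ℂ := fun a b =>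
  if a = 1 ∧ b = 0 then -Complex.I * rr q (((D : ℝ) - e) / 2 - (j : ℝ)) else 0

/-- The `2D × 2D` block-diagonal matrix `𝔱 = blockdiag(t(0), …, t(D-1))`,
with blocks of size 2 at indices `{2j, 2j+1}`. -/
def frakT (q D : ℕ) (e : ℝ) : Matrix (Fin (2 * D)) (Fin (2 * D)) ℂ :=
  Matrix.of fun i k =>
    if (i : ℕ) / 2 = (k : ℕ) / 2 then tEnt q e ((i : ℕ) % 2) ((k : ℕ) % 2) else 0

/-- The `2D × 2D` block-diagonal matrix `𝔲' = blockdiag(u'(0), …, u'(D-1))`,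
with blocks of size 2 at indices `{2j, 2j+1}`. -/
def frakUp (q D : ℕ) (e : ℝ) : Matrix (Fin (2 * D)) (Fin (2 * D)) ℂ :=
  Matrix.of fun i k =>
    if (i : ℕ) / 2 = (k : ℕ) / 2 then upEnt q D e ((i : ℕ) / 2) ((i : ℕ) % 2) ((k : ℕ) % 2)
    else 0

/-- The `2D × 2D` block-diagonal matrix `𝔱' = blockdiag(t'(0), t'(1), …, t'(D-1), t'(D))`,
where `t'(0) = t'(D) = (i·q^{-D/2})` are `1×1` blocks (at indices `0` and `2D-1`) and the
middle blocks `t'(j)`, `1 ≤ j ≤ D-1`, are `2×2` (at indices `{2j-1, 2j}`). -/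
def frakTp (q D : ℕ) : Matrix (Fin (2 * D)) (Fin (2 * D)) ℂ :=
  Matrix.of fun i k =>
    if (i : ℕ) = 0 then (if (k : ℕ) = 0 then Complex.I * rr q (-(D : ℝ) / 2) else 0)
    else if (i : ℕ) = 2 * D - 1 then
      (if (k : ℕ) = 2 * D - 1 then Complex.I * rr q (-(D : ℝ) / 2) else 0)
    else if (k : ℕ) = 0 ∨ (k : ℕ) = 2 * D - 1 then 0
    else if ((i : ℕ) + 1) / 2 = ((k : ℕ) + 1) / 2 then
      tpEnt q D (((i : ℕ) + 1) / 2) (((i : ℕ) + 1) % 2) (((k : ℕ) + 1) % 2)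
    else 0

/-- The `2D × 2D` block-diagonal matrix `𝔲 = blockdiag(u(0), u(1), …, u(D-1), u(D))`,
where `u(0) = (0)` and `u(D) = (-1)` are `1×1` blocks and the middle blocks are `2×2`. -/
def frakU (q D : ℕ) : Matrix (Fin (2 * D)) (Fin (2 * D)) ℂ :=
  Matrix.of fun i k =>
    if (i : ℕ) = 0 then 0
    else if (i : ℕ) = 2 * D - 1 then (if (k : ℕ) = 2 * D - 1 then -1 else 0)
    else if (k : ℕ) = 0 ∨ (k : ℕ) = 2 * D - 1 then 0
    else if ((i : ℕ) + 1) / 2 = ((k : ℕ) + 1) / 2 then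
      uEnt q D (((i : ℕ) + 1) / 2) (((i : ℕ) + 1) % 2) (((k : ℕ) + 1) % 2)
    else 0


lemma rr_mul {q : ℕ} (hq : 0 < q) (x y : ℝ) : rr q x * rr q y = rr q (x + y) := by
  have h : (0:ℝ) < q := by exact_mod_cast hq
  simp [rr, ← Complex.ofReal_mul, ← Real.rpow_add h]

lemma rr_nat {q : ℕ} (n : ℕ) : ((q:ℂ))^n = rr q n := by
  rw [rr, Real.rpow_natCast]; push_cast; ring

lemma rr_one' {q : ℕ} : rr q 1 = (q:ℂ) := by simp [rr]

lemma rr_congr {q : ℕ} {x y : ℝ} (h : x = y) : rr q x = rr q y := by rw [h]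

lemma sum_two {n : ℕ} (f : Fin n → ℂ) (a b : Fin n) (hab : a ≠ b)
    (h : ∀ c, c ≠ a → c ≠ b → f c = 0) : ∑ c, f c = f a + f b := by
  rw [← Finset.sum_pair hab]
  exact (Finset.sum_subset (Finset.subset_univ _) (by
    intro c _ hc
    simp only [Finset.mem_insert, Finset.mem_singleton, not_or] at hc
    exact h c hc.1 hc.2)).symm

lemma sum_one {n : ℕ} (f : Fin n → ℂ) (a : Fin n)
    (h : ∀ c, c ≠ a → f c = 0) : ∑ c, f c = f a :=
  Finset.sum_eq_single_of_mem a (Finset.mem_univ a) (fun c _ hc => h c hc)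

lemma bracket0 {q D M : ℕ} (hq : 0 < q) (hMD : M ≤ D) :
    -(rr q ((D:ℝ)/2) * (rr q ((M:ℝ) - (D:ℝ)) - 1))
      + (1 - (q:ℂ)^(D - M)) * rr q ((M:ℝ) - (D:ℝ)/2) = 0 := by
  have e1 : rr q ((D:ℝ)/2) * rr q ((M:ℝ) - (D:ℝ)) = rr q ((M:ℝ) - (D:ℝ)/2) := by
    rw [rr_mul hq]; exact rr_congr (by ring)
  have e2 : (q:ℂ)^(D - M) * rr q ((M:ℝ) - (D:ℝ)/2) = rr q ((D:ℝ)/2) := by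
    rw [rr_nat, rr_mul hq]
    exact rr_congr (by push_cast [Nat.cast_sub hMD]; ring)
  linear_combination -e1 - e2

lemma bracket1 {q D M : ℕ} (hMD : M ≤ D) :
    -(rr q (-(D:ℝ)/2) * ((q:ℂ)^D - (q:ℂ)^M + 1))
      + (1 - (q:ℂ)^(D - M)) * (rr q (-(D:ℝ)/2) * (1 - (q:ℂ)^M))
      = -((q:ℂ)^(D - M)) * rr q (-(D:ℝ)/2) := by
  have e1 : (q:ℂ)^(D-M) * (q:ℂ)^M = (q:ℂ)^D := by
    rw [← pow_add]; congr 1; omega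
  linear_combination (rr q (-(D:ℝ)/2)) * e1

set_option maxHeartbeats 3200000 in
/-- the relation `𝔲' = q·𝔲·𝔵` of Mazzocco's algebra `H_III` holds,
where `𝔵 = 𝔱'𝔱`. -/
theorem stmt_12 (q : ℕ) (hpp : IsPrimePow q) (D : ℕ) (hD : 3 ≤ D) (e : ℝ) (he : 0 ≤ e) :
    frakUp q D e = (q : ℂ) • (frakU q D * (frakTp q D * frakT q D e)) := by
  have hq2 : 2 ≤ q := hpp.two_le
  have hq0 : 0 < q := by omega
  ext i k
  have hi : (i:ℕ) < 2*D := i.isLt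
  have hk : (k:ℕ) < 2*D := k.isLt
  simp only [Matrix.smul_apply, smul_eq_mul]
  rw [Matrix.mul_apply]
  rcases Nat.even_or_odd (i:ℕ) with hpar | hpar
  · -- even row : both sides vanish
    have h2 : (i:ℕ) % 2 = 0 := Nat.even_iff.mp hpar
    have hL : frakUp q D e i k = 0 := by
      simp only [frakUp, Matrix.of_apply, upEnt, false_or, or_false, true_or, or_true, false_and, and_false, true_and, and_true]
      split_ifs <;> first | rfl | (exfalso; omega) | (exfalso; simp only [false_or, or_false] at *; all_goals omega)
    have hU : ∀ j, frakU q D i j = 0 := by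
      intro j
      simp only [frakU, Matrix.of_apply, Fin.val_mk, uEnt, false_or, or_false, true_or, or_true, false_and, and_false, true_and, and_true]
      split_ifs <;> first | rfl | (exfalso; omega) | (exfalso; simp only [false_or, or_false] at *; all_goals omega)
    rw [hL, Finset.sum_eq_zero (fun j _ => by rw [hU j, zero_mul]), mul_zero]
  · have h2 : (i:ℕ) % 2 = 1 := Nat.odd_iff.mp hpar
    by_cases hlast : (i:ℕ) = 2*D - 1
    · -- last row
      have hsum : ∑ j, frakU q D i j * (frakTp q D * frakT q D e) j k
          = frakU q D i i * (frakTp q D * frakT q D e) i k := by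
        refine sum_one _ i ?_
        intro c hc
        have hc' : (c:ℕ) ≠ (i:ℕ) := by simpa [Fin.ext_iff] using hc
        rw [mul_eq_zero]; left
        simp only [frakU, Matrix.of_apply, Fin.val_mk, uEnt, false_or, or_false, true_or, or_true, false_and, and_false, true_and, and_true]
        split_ifs <;> first | rfl | (exfalso; omega) | (exfalso; simp only [false_or, or_false] at *; all_goals omega)
      have hin : (frakTp q D * frakT q D e) i k
          = frakTp q D i i * frakT q D e i k := by
        rw [Matrix.mul_apply]
        refine sum_one _ i ?_
        intro c hc
        have hc' : (c:ℕ) ≠ (i:ℕ) := by simpa [Fin.ext_iff] using hc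
        rw [mul_eq_zero]; left
        simp only [frakTp, Matrix.of_apply, Fin.val_mk, tpEnt, false_or, or_false, true_or, or_true, false_and, and_false, true_and, and_true]
        split_ifs <;> first | rfl | (exfalso; omega) | (exfalso; simp only [false_or, or_false] at *; all_goals omega)
      have hUii : frakU q D i i = -1 := by
        simp only [frakU, Matrix.of_apply, Fin.val_mk, uEnt, false_or, or_false, true_or, or_true, false_and, and_false, true_and, and_true]
        split_ifs <;> first | rfl | (exfalso; omega) | (exfalso; simp only [false_or, or_false] at *; all_goals omega)
      have hTpii : frakTp q D i i = Complex.I * rr q (-(D:ℝ)/2) := by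
        simp only [frakTp, Matrix.of_apply, Fin.val_mk, tpEnt, false_or, or_false, true_or, or_true, false_and, and_false, true_and, and_true]
        split_ifs <;> first | rfl | (exfalso; omega) | (exfalso; simp only [false_or, or_false] at *; all_goals omega)
      rw [hsum, hin, hUii, hTpii]
      by_cases hkv : (k:ℕ) = 2*D - 2
      · have hT : frakT q D e i k = rr q (-e / 2) := by
          simp only [frakT, Matrix.of_apply, Fin.val_mk, tEnt, false_or, or_false, true_or, or_true, false_and, and_false, true_and, and_true]
          split_ifs <;> first | rfl | (exfalso; omega) | (exfalso; simp only [false_or, or_false] at *; all_goals omega)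
        have hL : frakUp q D e i k
            = -Complex.I * rr q (((D:ℝ) - e) / 2 - (((i:ℕ)/2 : ℕ) : ℝ)) := by
          simp only [frakUp, Matrix.of_apply, upEnt, false_or, or_false, true_or, or_true, false_and, and_false, true_and, and_true]
          split_ifs <;> first | rfl | (exfalso; omega) | (exfalso; simp only [false_or, or_false] at *; all_goals omega)
        rw [hT, hL]
        have e2 : (q:ℂ) * (rr q (-(D:ℝ)/2) * rr q (-e / 2))
            = rr q (((D:ℝ) - e) / 2 - (((i:ℕ)/2 : ℕ) : ℝ)) := by
          rw [show (q:ℂ) = rr q 1 from rr_one'.symm, rr_mul hq0, rr_mul hq0]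
          refine rr_congr ?_
          rw [show (i:ℕ)/2 = D - 1 from by omega, Nat.cast_sub (by omega), Nat.cast_one]
          ring
        linear_combination Complex.I * e2
      · have hT : frakT q D e i k = 0 := by
          simp only [frakT, Matrix.of_apply, Fin.val_mk, tEnt, false_or, or_false, true_or, or_true, false_and, and_false, true_and, and_true]
          split_ifs <;> first | rfl | (exfalso; omega) | (exfalso; simp only [false_or, or_false] at *; all_goals omega)
        have hL : frakUp q D e i k = 0 := by
          simp only [frakUp, Matrix.of_apply, upEnt, false_or, or_false, true_or, or_true, false_and, and_false, true_and, and_true]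
          split_ifs <;> first | rfl | (exfalso; omega) | (exfalso; simp only [false_or, or_false] at *; all_goals omega)
        rw [hT, hL]; ring
    · -- middle odd rows
      have hlt : (i:ℕ) + 1 < 2*D := by omega
      have hMD' : ((i:ℕ)+1)/2 ≤ D := by omega
      have hM1 : 1 ≤ ((i:ℕ)+1)/2 := by omega
      have hsum : ∑ j, frakU q D i j * (frakTp q D * frakT q D e) j k
          = frakU q D i i * (frakTp q D * frakT q D e) i k
          + frakU q D i ⟨(i:ℕ)+1, hlt⟩ * (frakTp q D * frakT q D e) ⟨(i:ℕ)+1, hlt⟩ k := by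
        refine sum_two _ i ⟨(i:ℕ)+1, hlt⟩ (by simp [Fin.ext_iff]) ?_
        intro c hc1 hc2
        have hc1' : (c:ℕ) ≠ (i:ℕ) := by simpa [Fin.ext_iff] using hc1
        have hc2' : (c:ℕ) ≠ (i:ℕ)+1 := by simpa [Fin.ext_iff] using hc2
        rw [mul_eq_zero]; left
        simp only [frakU, Matrix.of_apply, Fin.val_mk, uEnt, false_or, or_false, true_or, or_true, false_and, and_false, true_and, and_true]
        split_ifs <;> first | rfl | (exfalso; omega) | (exfalso; simp only [false_or, or_false] at *; all_goals omega)
      have hzTp : ∀ (r : Fin (2*D)), (r:ℕ) = (i:ℕ) ∨ (r:ℕ) = (i:ℕ)+1 →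
          ∀ c : Fin (2*D), c ≠ i → c ≠ ⟨(i:ℕ)+1, hlt⟩ → frakTp q D r c = 0 := by
        intro r hr c hc1 hc2
        have hc1' : (c:ℕ) ≠ (i:ℕ) := by simpa [Fin.ext_iff] using hc1
        have hc2' : (c:ℕ) ≠ (i:ℕ)+1 := by simpa [Fin.ext_iff] using hc2
        simp only [frakTp, Matrix.of_apply, Fin.val_mk, tpEnt, false_or, or_false, true_or, or_true, false_and, and_false, true_and, and_true]
        split_ifs <;> first | rfl | (exfalso; omega) | (exfalso; simp only [false_or, or_false] at *; all_goals omega)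
      have hin1 : (frakTp q D * frakT q D e) i k
          = frakTp q D i i * frakT q D e i k
          + frakTp q D i ⟨(i:ℕ)+1, hlt⟩ * frakT q D e ⟨(i:ℕ)+1, hlt⟩ k := by
        rw [Matrix.mul_apply]
        exact sum_two _ i ⟨(i:ℕ)+1, hlt⟩ (by simp [Fin.ext_iff])
          (fun c hc1 hc2 => by rw [mul_eq_zero]; exact Or.inl (hzTp i (Or.inl rfl) c hc1 hc2))
      have hin2 : (frakTp q D * frakT q D e) ⟨(i:ℕ)+1, hlt⟩ k
          = frakTp q D ⟨(i:ℕ)+1, hlt⟩ i * frakT q D e i k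
          + frakTp q D ⟨(i:ℕ)+1, hlt⟩ ⟨(i:ℕ)+1, hlt⟩ * frakT q D e ⟨(i:ℕ)+1, hlt⟩ k := by
        rw [Matrix.mul_apply]
        exact sum_two _ i ⟨(i:ℕ)+1, hlt⟩ (by simp [Fin.ext_iff])
          (fun c hc1 hc2 => by
            rw [mul_eq_zero]; exact Or.inl (hzTp _ (Or.inr (by simp)) c hc1 hc2))
      have hU1 : frakU q D i i = -1 := by
        simp only [frakU, Matrix.of_apply, Fin.val_mk, uEnt, false_or, or_false, true_or, or_true, false_and, and_false, true_and, and_true]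
        split_ifs <;> first | rfl | (exfalso; omega) | (exfalso; simp only [false_or, or_false] at *; all_goals omega)
      have hU2 : frakU q D i ⟨(i:ℕ)+1, hlt⟩ = 1 - (q:ℂ)^(D - ((i:ℕ)+1)/2) := by
        simp only [frakU, Matrix.of_apply, Fin.val_mk, uEnt, false_or, or_false, true_or, or_true, false_and, and_false, true_and, and_true]
        split_ifs <;> first | rfl | (exfalso; omega) | (exfalso; simp only [false_or, or_false] at *; all_goals omega)
      have hB11 : frakTp q D i i
          = Complex.I * (rr q (-(D:ℝ)/2) * ((q:ℂ)^D - (q:ℂ)^(((i:ℕ)+1)/2) + 1)) := by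
        simp only [frakTp, Matrix.of_apply, Fin.val_mk, tpEnt, false_or, or_false, true_or, or_true, false_and, and_false, true_and, and_true]
        split_ifs <;> first | rfl | (exfalso; omega) | (exfalso; simp only [false_or, or_false] at *; all_goals omega)
      have hB12 : frakTp q D i ⟨(i:ℕ)+1, hlt⟩
          = Complex.I * (rr q ((D:ℝ)/2) * (rr q (((((i:ℕ)+1)/2 : ℕ) : ℝ) - (D:ℝ)) - 1)) := by
        simp only [frakTp, Matrix.of_apply, Fin.val_mk, tpEnt, false_or, or_false, true_or, or_true, false_and, and_false, true_and, and_true]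
        split_ifs <;> first | rfl | (exfalso; omega) | (exfalso; simp only [false_or, or_false] at *; all_goals omega)
      have hB21 : frakTp q D ⟨(i:ℕ)+1, hlt⟩ i
          = Complex.I * (rr q (-(D:ℝ)/2) * (1 - (q:ℂ)^(((i:ℕ)+1+1)/2))) := by
        simp only [frakTp, Matrix.of_apply, Fin.val_mk, tpEnt, false_or, or_false, true_or, or_true, false_and, and_false, true_and, and_true]
        split_ifs <;> first | rfl | (exfalso; omega) | (exfalso; simp only [false_or, or_false] at *; all_goals omega)
      have hB22 : frakTp q D ⟨(i:ℕ)+1, hlt⟩ ⟨(i:ℕ)+1, hlt⟩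
          = Complex.I * rr q ((((((i:ℕ)+1+1)/2 : ℕ)) : ℝ) - (D:ℝ)/2) := by
        simp only [frakTp, Matrix.of_apply, Fin.val_mk, tpEnt, false_or, or_false, true_or, or_true, false_and, and_false, true_and, and_true]
        split_ifs <;> first | rfl | (exfalso; omega) | (exfalso; simp only [false_or, or_false] at *; all_goals omega)
      have hC1 : frakT q D e i k = if (k:ℕ) = (i:ℕ) - 1 then rr q (-e / 2) else 0 := by
        simp only [frakT, Matrix.of_apply, Fin.val_mk, tEnt, false_or, or_false, true_or, or_true, false_and, and_false, true_and, and_true]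
        split_ifs <;> first | rfl | (exfalso; omega) | (exfalso; simp only [false_or, or_false] at *; all_goals omega)
      have hC2 : frakT q D e ⟨(i:ℕ)+1, hlt⟩ k
          = if (k:ℕ) = (i:ℕ)+1 then (rr q (-e / 2) - rr q (e / 2))
            else if (k:ℕ) = (i:ℕ)+2 then rr q (e / 2) else 0 := by
        simp only [frakT, Matrix.of_apply, Fin.val_mk, tEnt, false_or, or_false, true_or, or_true, false_and, and_false, true_and, and_true]
        split_ifs <;> first | rfl | (exfalso; omega) | (exfalso; simp only [false_or, or_false] at *; all_goals omega)
      have hLHS : frakUp q D e i k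
          = if (k:ℕ) = (i:ℕ) - 1 then
              -Complex.I * rr q (((D:ℝ) - e) / 2 - (((i:ℕ)/2 : ℕ) : ℝ)) else 0 := by
        simp only [frakUp, Matrix.of_apply, upEnt, false_or, or_false, true_or, or_true, false_and, and_false, true_and, and_true]
        split_ifs <;> first | rfl | (exfalso; omega) | (exfalso; simp only [false_or, or_false] at *; all_goals omega)
      have hMM : ((i:ℕ)+1+1)/2 = ((i:ℕ)+1)/2 := by omega
      rw [hsum, hin1, hin2, hU1, hU2, hB11, hB12, hB21, hB22, hC1, hC2, hLHS, hMM]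
      by_cases hk1 : (k:ℕ) = (i:ℕ) - 1
      · rw [if_pos hk1, if_pos hk1, if_neg (by omega), if_neg (by omega)]
        have e1 := bracket1 (q := q) (D := D) (M := ((i:ℕ)+1)/2) hMD'
        have e2 : (q:ℂ) * ((q:ℂ)^(D - ((i:ℕ)+1)/2) * rr q (-(D:ℝ)/2) * rr q (-e / 2))
            = rr q (((D:ℝ) - e) / 2 - (((i:ℕ)/2 : ℕ) : ℝ)) := by
          rw [rr_nat, show (q:ℂ) = rr q 1 from rr_one'.symm, rr_mul hq0, rr_mul hq0,
            rr_mul hq0]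
          refine rr_congr ?_
          rw [show (i:ℕ)/2 = ((i:ℕ)+1)/2 - 1 from by omega,
            Nat.cast_sub hM1, Nat.cast_sub hMD', Nat.cast_one]
          ring
        linear_combination (-(q:ℂ) * Complex.I * rr q (-e / 2)) * e1 + Complex.I * e2
      · rw [if_neg hk1, if_neg hk1]
        have e1 := bracket0 (q := q) (D := D) (M := ((i:ℕ)+1)/2) hq0 hMD'
        by_cases hk2 : (k:ℕ) = (i:ℕ)+1
        · rw [if_pos hk2]
          linear_combination (-(q:ℂ) * Complex.I * (rr q (-e / 2) - rr q (e / 2))) * e1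
        · rw [if_neg hk2]
          by_cases hk3 : (k:ℕ) = (i:ℕ)+2
          · rw [if_pos hk3]
            linear_combination (-(q:ℂ) * Complex.I * rr q (e / 2)) * e1
          · rw [if_neg hk3]; ring

end
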